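/- Let n ≥ 2 be an integer and s ∈ (0,1). Let u : (0,∞) → ℝ be continuous and attain its supremum at some r̄ > 0, i.e. u(r̄) ≥ u(r) for all r > 0. Suppose that the function τ ↦ [u(r̄) − u(r̄τ) + (u(r̄) − u(r̄/τ)) τ^{2s−n}] · τ (τ²−1)^{−1−2s} H(τ) is Lebesgue integrable on (1,∞) and that its integral over (1,∞) is ≤ 0 (i.e. −(−Δ)^s u(r̄) ≥ 0 via the radial representation). Then u is constant on (0,∞). -/
import Mathlib


open MeasureTheory

/-- The kernel `H(τ)` from the radial representation of the fractional Laplacian. -/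
noncomputable def Hker (n : ℕ) (s τ : ℝ) : ℝ :=
  2 * Real.pi * (Real.pi ^ (((n : ℝ) - 3) / 2) / Real.Gamma (((n : ℝ) - 1) / 2)) *
    ∫ θ in (0:ℝ)..Real.pi,
      Real.sin θ ^ (n - 2) *
        ((Real.sqrt (τ ^ 2 - Real.sin θ ^ 2) + Real.cos θ) ^ (1 + 2 * s) /
          Real.sqrt (τ ^ 2 - Real.sin θ ^ 2))


lemma sqrt_add_cos_pos {τ θ : ℝ} (hτ : 1 < τ) :
    0 < Real.sqrt (τ ^ 2 - Real.sin θ ^ 2) + Real.cos θ := by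
  have h1 : Real.cos θ ^ 2 < τ ^ 2 - Real.sin θ ^ 2 := by
    nlinarith [Real.sin_sq_add_cos_sq θ]
  have h2 : |Real.cos θ| < Real.sqrt (τ ^ 2 - Real.sin θ ^ 2) := by
    rw [← Real.sqrt_sq_eq_abs]
    exact Real.sqrt_lt_sqrt (sq_nonneg _) h1
  have := neg_abs_le (Real.cos θ)
  linarith

lemma denom_pos {τ : ℝ} (hτ : 1 < τ) (θ : ℝ) :
    0 < Real.sqrt (τ ^ 2 - Real.sin θ ^ 2) := by
  apply Real.sqrt_pos.2
  nlinarith [Real.sin_sq_add_cos_sq θ, sq_nonneg (Real.cos θ)]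

lemma Hker_pos {n : ℕ} (hn : 2 ≤ n) {s : ℝ} (hs0 : 0 < s) {τ : ℝ} (hτ : 1 < τ) :
    0 < Hker n s τ := by
  have hcont : Continuous (fun θ => Real.sin θ ^ (n - 2) *
      ((Real.sqrt (τ ^ 2 - Real.sin θ ^ 2) + Real.cos θ) ^ (1 + 2 * s) /
        Real.sqrt (τ ^ 2 - Real.sin θ ^ 2))) := by
    apply Continuous.mul (by continuity)
    apply Continuous.div
    · apply Continuous.rpow_const (by continuity)
      intro x; right; positivity
    · continuity
    · intro x; exact (denom_pos hτ x).ne'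
  have hGamma : 0 < Real.Gamma (((n : ℝ) - 1) / 2) := by
    apply Real.Gamma_pos_of_pos
    have : (2:ℝ) ≤ (n:ℝ) := by exact_mod_cast hn
    linarith
  unfold Hker
  apply mul_pos
  · apply mul_pos (by positivity)
    exact div_pos (Real.rpow_pos_of_pos Real.pi_pos _) hGamma
  · apply intervalIntegral.intervalIntegral_pos_of_pos_on
      (hcont.intervalIntegrable 0 Real.pi)
    · intro θ hθ
      apply mul_pos
      · exact pow_pos (Real.sin_pos_of_pos_of_lt_pi hθ.1 hθ.2) _
      · exact div_pos (Real.rpow_pos_of_pos (sqrt_add_cos_pos hτ) _) (denom_pos hτ θ)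
    · exact Real.pi_pos

/-- Strong maximum principle for radial `s`-subharmonic functions: if a continuous radial
function attains its supremum at `r̄ > 0` and `-(-Δ)^s u(r̄) ≥ 0` via the radial
representation, then `u` is constant. -/
theorem stmt_8 (n : ℕ) (hn : 2 ≤ n) (s : ℝ) (hs : s ∈ Set.Ioo (0:ℝ) 1)
    (u : ℝ → ℝ) (hcont : ContinuousOn u (Set.Ioi 0))
    (rb : ℝ) (hrb : 0 < rb) (hmax : ∀ r > (0:ℝ), u r ≤ u rb)
    (hint : IntegrableOn
      (fun τ : ℝ =>
        (u rb - u (rb * τ) + (u rb - u (rb / τ)) * τ ^ (2 * s - (n : ℝ))) *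
          (τ * (τ ^ 2 - 1) ^ (-1 - 2 * s) * Hker n s τ))
      (Set.Ioi 1))
    (hle : (∫ τ in Set.Ioi (1:ℝ),
        (u rb - u (rb * τ) + (u rb - u (rb / τ)) * τ ^ (2 * s - (n : ℝ))) *
          (τ * (τ ^ 2 - 1) ^ (-1 - 2 * s) * Hker n s τ)) ≤ 0) :
    ∀ r > (0:ℝ), u r = u rb := by
  obtain ⟨hs0, hs1⟩ := hs
  set f : ℝ → ℝ := fun τ : ℝ =>
        (u rb - u (rb * τ) + (u rb - u (rb / τ)) * τ ^ (2 * s - (n : ℝ))) *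
          (τ * (τ ^ 2 - 1) ^ (-1 - 2 * s) * Hker n s τ) with hf
  have hw : ∀ τ : ℝ, 1 < τ → 0 < τ * (τ ^ 2 - 1) ^ (-1 - 2 * s) * Hker n s τ := by
    intro τ hτ
    have h1 : (0:ℝ) < τ ^ 2 - 1 := by nlinarith
    exact mul_pos (mul_pos (by linarith) (Real.rpow_pos_of_pos h1 _)) (Hker_pos hn hs0 hτ)
  have hA1 : ∀ τ : ℝ, 1 < τ → 0 ≤ u rb - u (rb * τ) := by
    intro τ hτ
    have : 0 < rb * τ := by positivity
    linarith [hmax (rb * τ) this]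
  have hA2 : ∀ τ : ℝ, 1 < τ → 0 ≤ (u rb - u (rb / τ)) * τ ^ (2 * s - (n : ℝ)) := by
    intro τ hτ
    have h1 : 0 < rb / τ := by positivity
    exact mul_nonneg (by linarith [hmax (rb / τ) h1]) (Real.rpow_nonneg (by linarith) _)
  have hnonneg : 0 ≤ᵐ[volume.restrict (Set.Ioi (1:ℝ))] f := by
    rw [Filter.EventuallyLE, ae_restrict_iff' measurableSet_Ioi]
    refine Filter.Eventually.of_forall fun τ hτ => ?_
    have hτ : (1:ℝ) < τ := hτ
    exact mul_nonneg (by linarith [hA1 τ hτ, hA2 τ hτ]) (hw τ hτ).le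
  have hzero : (∫ τ in Set.Ioi (1:ℝ), f τ) = 0 :=
    le_antisymm hle (integral_nonneg_of_ae hnonneg)
  have hf0 : f =ᵐ[volume.restrict (Set.Ioi (1:ℝ))] 0 :=
    (integral_eq_zero_iff_of_nonneg_ae hnonneg hint).1 hzero
  have hae : ∀ᵐ τ : ℝ, τ ∈ Set.Ioi (1:ℝ) →
      u (rb * τ) = u rb ∧ u (rb / τ) = u rb := by
    have h1 : ∀ᵐ τ : ℝ, τ ∈ Set.Ioi (1:ℝ) → f τ = 0 :=
      (ae_restrict_iff' measurableSet_Ioi).1 hf0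
    refine h1.mono fun τ h hτ => ?_
    have hτ' : (1:ℝ) < τ := hτ
    have hfz := h hτ
    have hAz : u rb - u (rb * τ) + (u rb - u (rb / τ)) * τ ^ (2 * s - (n : ℝ)) = 0 := by
      rcases mul_eq_zero.1 hfz with h' | h'
      · exact h'
      · exact absurd h' (hw τ hτ').ne'
    have h2 : (u rb - u (rb / τ)) * τ ^ (2 * s - (n : ℝ)) = 0 := by
      linarith [hA1 τ hτ', hA2 τ hτ']
    have h3 : u rb - u (rb / τ) = 0 := by
      rcases mul_eq_zero.1 h2 with h' | h'
      · exact h'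
      · exact absurd h' (Real.rpow_pos_of_pos (by linarith) _).ne'
    constructor
    · linarith [hA1 τ hτ', hA2 τ hτ']
    · linarith
  have hgood : ∀ a b : ℝ, 1 ≤ a → a < b →
      ∃ τ ∈ Set.Ioo a b, u (rb * τ) = u rb ∧ u (rb / τ) = u rb := by
    intro a b ha hab
    by_contra h
    push_neg at h
    have hsub : Set.Ioo a b ⊆
        {τ : ℝ | ¬ (τ ∈ Set.Ioi 1 → u (rb * τ) = u rb ∧ u (rb / τ) = u rb)} := by
      intro τ hτ
      simp only [Set.mem_setOf_eq]
      intro hc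
      have hc2 := hc (lt_of_le_of_lt ha hτ.1)
      exact h τ hτ hc2.1 hc2.2
    have h0 := measure_mono_null hsub (ae_iff.1 hae)
    rw [Real.volume_Ioo] at h0
    exact absurd h0 (ENNReal.ofReal_pos.2 (by linarith)).ne'
  -- approximation lemma
  have key : ∀ r : ℝ, 0 < r →
      (∀ ε > (0:ℝ), ∃ r', 0 < r' ∧ |r' - r| < ε ∧ u r' = u rb) → u r = u rb := by
    intro r hr happrox
    have hc : ContinuousWithinAt u (Set.Ioi 0) r := hcont r hr
    rw [Metric.continuousWithinAt_iff] at hc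
    by_contra hne
    have hpos : 0 < |u r - u rb| := abs_pos.2 (sub_ne_zero.2 hne)
    obtain ⟨δ, hδ, hδ'⟩ := hc _ hpos
    obtain ⟨r', hr'0, hr'd, hr'e⟩ := happrox (min δ r) (lt_min hδ hr)
    have hmem : r' ∈ Set.Ioi (0:ℝ) := hr'0
    have hdist : dist r' r < δ := by
      rw [Real.dist_eq]; exact lt_of_lt_of_le hr'd (min_le_left _ _)
    have := hδ' hmem hdist
    rw [hr'e, Real.dist_eq, abs_sub_comm] at this
    exact absurd this (lt_irrefl _)
  intro r hr
  rcases lt_trichotomy r rb with hcase | hcase | hcase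
  · -- r < rb : use r' = rb / τ
    refine key r hr fun ε hε => ?_
    set δ : ℝ := min ε (rb - r) with hδdef
    have hδ0 : 0 < δ := lt_min hε (by linarith)
    have hδle : r + δ ≤ rb := by
      have := min_le_right ε (rb - r); simp only [hδdef]; linarith
    have ha1 : (1:ℝ) ≤ rb / (r + δ) :=
      (one_le_div (by linarith)).2 hδle
    have hab : rb / (r + δ) < rb / r := by
      apply div_lt_div_of_pos_left hrb hr; linarith
    obtain ⟨τ, hτ, hgood1, hgood2⟩ := hgood _ _ ha1 hab
    have hτ0 : 0 < τ := lt_of_lt_of_le one_pos (le_of_lt (lt_of_le_of_lt ha1 hτ.1))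
    refine ⟨rb / τ, by positivity, ?_, hgood2⟩
    have hub : rb / τ < r + δ := by
      rw [div_lt_iff₀ hτ0]
      have := hτ.1
      calc rb = (rb / (r + δ)) * (r + δ) := by field_simp
        _ < τ * (r + δ) := by
            apply mul_lt_mul_of_pos_right this (by linarith)
        _ = (r + δ) * τ := mul_comm _ _
    have hlb : r < rb / τ := by
      rw [lt_div_iff₀ hτ0]
      have := hτ.2
      calc r * τ < r * (rb / r) := by
            apply mul_lt_mul_of_pos_left this hr
        _ = rb := by field_simp
    rw [abs_sub_lt_iff]
    have : δ ≤ ε := min_le_left _ _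
    constructor <;> linarith
  · simp [hcase]
  · -- rb < r : use r' = rb * τ
    refine key r hr fun ε hε => ?_
    set a : ℝ := max 1 ((r - ε) / rb) with hadef
    have hab : a < (r + ε) / rb := by
      apply max_lt
      · rw [lt_div_iff₀ hrb]; linarith
      · apply div_lt_div_of_pos_right (by linarith) hrb
    obtain ⟨τ, hτ, hgood1, hgood2⟩ := hgood _ _ (le_max_left _ _) hab
    have hτ1 : 1 < τ := lt_of_le_of_lt (le_max_left _ _) hτ.1
    refine ⟨rb * τ, by positivity, ?_, hgood1⟩
    have hub : rb * τ < r + ε := by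
      have := hτ.2
      calc rb * τ < rb * ((r + ε) / rb) := mul_lt_mul_of_pos_left this hrb
        _ = r + ε := by field_simp
    have hlb : r - ε < rb * τ := by
      have h1 : (r - ε) / rb ≤ a := le_max_right _ _
      have h2 : (r - ε) / rb < τ := lt_of_le_of_lt h1 hτ.1
      calc r - ε = rb * ((r - ε) / rb) := by field_simp
        _ < rb * τ := mul_lt_mul_of_pos_left h2 hrb
    rw [abs_sub_lt_iff]
    constructor <;> linarith
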